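/- arXiv:1405.2945 — 3 statements merged into one kernel-verified Lean document; each statement's English description precedes it below -/
import Mathlib

section
/- Let K be a field and M an m × n matrix over K. Let r_1 < r_2 < ... < r_k be row indices and c_1 > c_2 > ... > c_k be column indices, and set X = {(r_1,c_1), ..., (r_k,c_k)} (an antidiagonal). Let T ⊆ {1, ..., k} be nonempty, let A = {(r_t, c_t) : t ∈ T}, let p = max{r_t : t ∈ T} and q = max{c_t : t ∈ T}. If the submatrix of M on rows 1, ..., p and columns 1, ..., q has rank at most |T| − 1, then the determinant of the k × k submatrix of M on rows r_1, ..., r_k and columns c_k, ..., c_1 equals 0. -/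
open Matrix Module

section aux
variable {K : Type*} [Field K]

lemma aux_rank_submatrix_le' {m' n' l' o' : Type*} [Fintype m'] [Fintype n']
    [DecidableEq m'] [DecidableEq n'] [Fintype o']
    (A : Matrix m' n' K) (f : l' → m') (g : o' → n') :
    (A.submatrix f g).rank ≤ A.rank := by
  have h1 : A.submatrix f g =
      (1 : Matrix m' m' K).submatrix f (Equiv.refl m') * (A.submatrix id g) := by
    rw [Matrix.one_submatrix_mul]
    simp [Matrix.submatrix_submatrix]
  have h2 : A.submatrix id g = A * (1 : Matrix n' n' K).submatrix (Equiv.refl n') g := by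
    rw [Matrix.mul_submatrix_one]
    rfl
  calc (A.submatrix f g).rank ≤ (A.submatrix id g).rank := by
        rw [h1]; exact Matrix.rank_mul_le_right _ _
    _ ≤ A.rank := by rw [h2]; exact Matrix.rank_mul_le_left _ _

lemma aux_rank_rows {n' l' : Type*} [Fintype n'] [DecidableEq n'] [Fintype l'] [DecidableEq l']
    (N : Matrix n' n' K) (hN : IsUnit N.det) (ι : l' → n') (hι : Function.Injective ι) :
    (N.submatrix ι id).rank = Fintype.card l' := by
  have h1 : N.submatrix ι id = (1 : Matrix n' n' K).submatrix ι (Equiv.refl n') * N := by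
    rw [Matrix.one_submatrix_mul]
    rfl
  rw [h1, Matrix.rank_mul_eq_left_of_isUnit_det _ _ hN]
  refine le_antisymm (Matrix.rank_le_card_height _) ?_
  have h2 : (1 : Matrix n' n' K).submatrix ι (⇑(Equiv.refl n')) *
      (1 : Matrix n' n' K).submatrix id ι = (1 : Matrix l' l' K) := by
    rw [show ⇑(Equiv.refl n') = (id : n' → n') from rfl,
      ← Matrix.submatrix_mul _ _ ι (id : n' → n') ι Function.bijective_id, Matrix.one_mul]
    ext i j
    simp only [Matrix.submatrix_apply, Matrix.one_apply, hι.eq_iff]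
  calc Fintype.card l' = (1 : Matrix l' l' K).rank := (Matrix.rank_one).symm
    _ = ((1 : Matrix n' n' K).submatrix ι (⇑(Equiv.refl n')) *
          (1 : Matrix n' n' K).submatrix id ι).rank := by rw [h2]
    _ ≤ ((1 : Matrix n' n' K).submatrix ι (⇑(Equiv.refl n'))).rank :=
        Matrix.rank_mul_le_left _ _

lemma aux_rank_le_cols {m' n' : Type*} [Fintype m'] [Fintype n'] (A : Matrix m' n' K)
    (p : n' → Prop) [DecidablePred p] :
    A.rank ≤ (A.submatrix id (fun j : {j // p j} => (j : n'))).rank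
      + Fintype.card {j // ¬ p j} := by
  classical
  set A₁ := A.submatrix id (fun j : {j // p j} => (j : n')) with hA₁
  set A₂ := A.submatrix id (fun j : {j // ¬ p j} => (j : n')) with hA₂
  have hle : LinearMap.range A.mulVecLin ≤
      LinearMap.range A₁.mulVecLin ⊔ LinearMap.range A₂.mulVecLin := by
    rintro y ⟨x, rfl⟩
    refine Submodule.mem_sup.mpr ⟨A₁.mulVec (fun j => x j.1), ⟨_, rfl⟩,
      A₂.mulVec (fun j => x j.1), ⟨_, rfl⟩, ?_⟩
    funext i
    simp only [Pi.add_apply, Matrix.mulVecLin_apply, Matrix.mulVec, dotProduct, hA₁, hA₂,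
      Matrix.submatrix_apply, id]
    exact Fintype.sum_subtype_add_sum_subtype p (fun j => A i j * x j)
  calc A.rank ≤ finrank K ↥(LinearMap.range A₁.mulVecLin ⊔ LinearMap.range A₂.mulVecLin) :=
        Submodule.finrank_mono hle
    _ ≤ A₁.rank + A₂.rank := Submodule.finrank_add_le_finrank_add_finrank _ _
    _ ≤ A₁.rank + Fintype.card {j // ¬ p j} := by
        gcongr
        exact A₂.rank_le_card_width

lemma aux_card_Iic_subtype {k : ℕ} (x : Fin k) :
    Fintype.card {i : Fin k // i ≤ x} = x.val + 1 := by
  have e : {i : Fin k // i ≤ x} ≃ Fin (x.val + 1) :=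
    { toFun := fun i => ⟨i.1.1, Nat.lt_succ_of_le i.2⟩
      invFun := fun j => ⟨⟨j.1, lt_of_le_of_lt (Nat.le_of_lt_succ j.2) x.isLt⟩,
        Fin.mk_le_mk.mpr (Nat.le_of_lt_succ j.2)⟩
      left_inv := fun i => by ext; rfl
      right_inv := fun j => rfl }
  rw [Fintype.card_congr e, Fintype.card_fin]

end aux


/-- Let `K` be a field and `M` an `m × n` matrix over `K`.  Let
`r 0 < r 1 < ⋯ < r (k-1)` be row indices and `c 0 > c 1 > ⋯ > c (k-1)` be column indices,
so that `X = {(r t, c t)}` is an antidiagonal.  Let `T` be a nonempty subset of `Fin k`,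
giving the sub-antidiagonal `A = {(r t, c t) : t ∈ T}`; let `p = max {r t : t ∈ T}` and
`q = max {c t : t ∈ T}`.  If the northwest submatrix of `M` on rows `≤ p` and columns `≤ q`
has rank at most `|T| - 1`, then the determinant of the `k × k` submatrix of `M` on rows
`r 0, …, r (k-1)` and columns `c (k-1), …, c 0` (i.e. the columns listed in increasing
order) vanishes. -/
theorem det_eq_zero_of_nw_rank_lt {K : Type*} [Field K] {m n k : ℕ}
    (M : Matrix (Fin m) (Fin n) K)
    (r : Fin k → Fin m) (c : Fin k → Fin n)
    (hr : StrictMono r) (hc : StrictAnti c)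
    (T : Finset (Fin k)) (hT : T.Nonempty)
    (hrank :
      (Matrix.of fun (a : {a : Fin m // a ≤ T.sup' hT r}) (b : {b : Fin n // b ≤ T.sup' hT c}) =>
          M a.1 b.1).rank ≤ T.card - 1) :
    (M.submatrix r (fun t => c t.rev)).det = 0 := by
  classical
  by_contra hdet
  set N := M.submatrix r (fun t : Fin k => c t.rev) with hNdef
  have hNunit : IsUnit N.det := isUnit_iff_ne_zero.mpr hdet
  set a := T.max' hT with ha
  set b := T.min' hT with hb
  -- the rectangle of N on rows ≤ a and columns ≤ b.rev sits in the NW submatrix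
  have hrect : (((N.submatrix (Subtype.val : {i : Fin k // i ≤ a} → Fin k) id)).submatrix id
      (fun j : {j : Fin k // j ≤ b.rev} => (j : Fin k))).rank ≤ T.card - 1 := by
    have hEq : ((N.submatrix (Subtype.val : {i : Fin k // i ≤ a} → Fin k) id)).submatrix id
        (fun j : {j : Fin k // j ≤ b.rev} => (j : Fin k)) =
        (Matrix.of fun (a' : {a' : Fin m // a' ≤ T.sup' hT r})
            (b' : {b' : Fin n // b' ≤ T.sup' hT c}) => M a'.1 b'.1).submatrix
          (fun i : {i : Fin k // i ≤ a} =>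
            ⟨r i.1, le_trans (hr.monotone i.2) (Finset.le_sup' r (T.max'_mem hT))⟩)
          (fun j : {j : Fin k // j ≤ b.rev} =>
            ⟨c j.1.rev, le_trans (hc.antitone (Fin.le_rev_iff.mp j.2))
              (Finset.le_sup' c (T.min'_mem hT))⟩) := by
      ext i j
      rfl
    rw [hEq]
    exact le_trans (aux_rank_submatrix_le' _ _ _) hrank
  have hrow : (N.submatrix (Subtype.val : {i : Fin k // i ≤ a} → Fin k) id).rank
      = Fintype.card {i : Fin k // i ≤ a} :=
    aux_rank_rows N hNunit _ Subtype.val_injective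
  have hsplit := aux_rank_le_cols (K := K)
    (N.submatrix (Subtype.val : {i : Fin k // i ≤ a} → Fin k) id)
    (fun j : Fin k => j ≤ b.rev)
  rw [hrow] at hsplit
  have hcardI : Fintype.card {i : Fin k // i ≤ a} = a.val + 1 := aux_card_Iic_subtype a
  have hcardJc : Fintype.card {j : Fin k // ¬ j ≤ b.rev} = k - (b.rev.val + 1) := by
    rw [Fintype.card_subtype_compl, aux_card_Iic_subtype, Fintype.card_fin]
  have hTcard : T.card ≤ a.val + 1 - b.val := by
    have hsub : T ⊆ Finset.Icc b a := fun t ht =>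
      Finset.mem_Icc.mpr ⟨T.min'_le t ht, T.le_max' t ht⟩
    calc T.card ≤ (Finset.Icc b a).card := Finset.card_le_card hsub
      _ = a.val + 1 - b.val := Fin.card_Icc b a
  have hba : b.val ≤ a.val := T.min'_le a (T.max'_mem hT)
  have hT1 : 1 ≤ T.card := Finset.card_pos.mpr hT
  have hrev : b.rev.val = k - (b.val + 1) := Fin.val_rev b
  have hbk : b.val < k := b.isLt
  rw [hcardI, hcardJc] at hsplit
  have hrectle := hrect
  omega
end

section
/- Let K be an algebraically closed field and let R = K[m_{a,b} : 1 ≤ a,b ≤ n] be the polynomial ring whose variables are the entries of the generic n × n matrix. Let I_A and I_B be radical ideals of R given by northwest rank conditions. Let A and B be antidiagonals such that det(A) is a Fulton generator of I_A (i.e., for some defining triple (i,j,k) of I_A one has |A| = k and A ⊆ {1,...,i} × {1,...,j}) and det(B) is a Fulton generator of I_B in the same sense. If X = A ∪ B is again an antidiagonal and A ∩ B ≠ ∅, then det(X) ∈ I_A ∩ I_B. -/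
open MvPolynomial

/-- The generic `n × n` matrix, whose `(a,b)` entry is the variable `m_{a,b}` of
`K[m_{a,b} : 1 ≤ a,b ≤ n]`. -/
noncomputable def genericMatrix (n : ℕ) (K : Type*) [CommSemiring K] :
    Matrix (Fin n) (Fin n) (MvPolynomial (Fin n × Fin n) K) :=
  Matrix.of fun a b => X (a, b)

/-- For an antidiagonal given by strictly increasing rows `r` and strictly decreasing
columns `c`, `antidiagDet n K r c` is the determinant of the `k × k` submatrix of the
generic matrix on rows `r 0, …, r (k-1)` and columns `c (k-1), …, c 0` (columns listed in
increasing order). -/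
noncomputable def antidiagDet (n : ℕ) (K : Type*) [CommRing K] {k : ℕ}
    (r c : Fin k → Fin n) : MvPolynomial (Fin n × Fin n) K :=
  ((genericMatrix n K).submatrix r (fun t => c t.rev)).det

/-- The set of all `k × k` minors of the northwest `i × j` submatrix of the generic
`n × n` matrix (rows `1..i`, columns `1..j`). -/
def nwMinors (n : ℕ) (K : Type*) [CommRing K] (i j k : ℕ) :
    Set (MvPolynomial (Fin n × Fin n) K) :=
  { f | ∃ r c : Fin k → Fin n, StrictMono r ∧ StrictMono c ∧
      (∀ t, (r t : ℕ) < i) ∧ (∀ t, (c t : ℕ) < j) ∧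
      f = ((genericMatrix n K).submatrix r c).det }

/-- The ideal given by the northwest rank conditions recorded in a finite set `S` of
triples `(i, j, k)`: it is generated by all `k × k` minors of the northwest `i × j`
submatrix of the generic matrix, over all `(i,j,k) ∈ S`. -/
noncomputable def nwIdeal (n : ℕ) (K : Type*) [CommRing K] (S : Finset (ℕ × ℕ × ℕ)) :
    Ideal (MvPolynomial (Fin n × Fin n) K) :=
  Ideal.span (⋃ s ∈ S, nwMinors n K s.1 s.2.1 s.2.2)

section Aux

open Module Submodule Matrix

variable {K : Type*} [Field K]

/-- From a family whose span has finrank at least `k`, extract `k` indices with linearly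
independent values. -/
lemma exists_inj_linearIndependent {V : Type*} [AddCommGroup V] [Module K V]
    [FiniteDimensional K V] {ι : Type*} (f : ι → V) {k : ℕ}
    (h : k ≤ finrank K (span K (Set.range f))) :
    ∃ g : Fin k → ι, Function.Injective g ∧ LinearIndependent K (f ∘ g) := by
  obtain ⟨b, hbsub, hbspan, hbli⟩ := exists_linearIndependent K (Set.range f)
  have hbfin : b.Finite := hbli.setFinite
  haveI := hbfin.fintype
  have hcard : finrank K (span K b) = b.toFinset.card := finrank_span_set_eq_card hbli
  have hk : Fintype.card (Fin k) ≤ Fintype.card b := by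
    rw [hbspan] at hcard
    have h2 : b.toFinset.card = Fintype.card b := Set.toFinset_card b
    simp only [Fintype.card_fin]
    omega
  obtain ⟨g0⟩ := Function.Embedding.nonempty_of_card_le hk
  have hex : ∀ x : b, ∃ i, f i = (x : V) := fun x => hbsub x.2
  choose idx hidx using hex
  refine ⟨fun t => idx (g0 t), ?_, ?_⟩
  · intro t1 t2 h12
    simp only at h12
    apply g0.injective
    apply Subtype.ext
    rw [← hidx (g0 t1), ← hidx (g0 t2), h12]
  · have heq : f ∘ (fun t => idx (g0 t)) = (fun x : b => (x : V)) ∘ g0 := by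
      funext t; simp [Function.comp, hidx]
    rw [heq]
    exact hbli.comp g0 g0.injective

lemma finrank_sup_le' {V : Type*} [AddCommGroup V] [Module K V] [FiniteDimensional K V]
    (p q : Submodule K V) : finrank K ↥(p ⊔ q) ≤ finrank K p + finrank K q := by
  have := Submodule.finrank_sup_add_finrank_inf_eq p q
  omega

lemma rank_le_rank_submatrix_cols_add {m q : Type*} [Fintype m] [Fintype q]
    (A : Matrix m q K) (Q : Finset q) :
    A.rank ≤ (A.submatrix id (Subtype.val : {u // u ∈ Q} → q)).rank
      + (Fintype.card q - Q.card) := by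
  classical
  rw [Matrix.rank_eq_finrank_span_cols]
  have hsub : Set.range Aᵀ ⊆
      Set.range ((A.submatrix id (Subtype.val : {u // u ∈ Q} → q))ᵀ) ∪
      Set.range ((A.submatrix id (Subtype.val : {u // u ∈ Qᶜ} → q))ᵀ) := by
    rintro _ ⟨u, rfl⟩
    by_cases hu : u ∈ Q
    · exact Or.inl ⟨⟨u, hu⟩, rfl⟩
    · exact Or.inr ⟨⟨u, Finset.mem_compl.2 hu⟩, rfl⟩
  calc finrank K (span K (Set.range Aᵀ))
      ≤ finrank K (span K (Set.range ((A.submatrix id (Subtype.val : {u // u ∈ Q} → q))ᵀ) ∪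
          Set.range ((A.submatrix id (Subtype.val : {u // u ∈ Qᶜ} → q))ᵀ))) :=
        Submodule.finrank_mono (span_mono hsub)
    _ ≤ finrank K (span K (Set.range ((A.submatrix id (Subtype.val : {u // u ∈ Q} → q))ᵀ)))
        + finrank K (span K (Set.range ((A.submatrix id (Subtype.val : {u // u ∈ Qᶜ} → q))ᵀ))) := by
        rw [Submodule.span_union]; exact finrank_sup_le' _ _
    _ ≤ (A.submatrix id (Subtype.val : {u // u ∈ Q} → q)).rank
        + (Fintype.card q - Q.card) := by
        gcongr
        · exact (Matrix.rank_eq_finrank_span_cols (A.submatrix id (Subtype.val : {u // u ∈ Q} → q))).ge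
        · refine (Matrix.rank_eq_finrank_span_cols (A.submatrix id (Subtype.val : {u // u ∈ Qᶜ} → q))).ge.trans ?_
          refine (Matrix.rank_le_card_width _).trans ?_
          rw [Fintype.card_coe, Finset.card_compl]

lemma rank_le_rank_submatrix_rows_add {m q : Type*} [Fintype m] [Fintype q]
    (A : Matrix m q K) (P : Finset m) :
    A.rank ≤ (A.submatrix (Subtype.val : {u // u ∈ P} → m) id).rank
      + (Fintype.card m - P.card) := by
  have h := rank_le_rank_submatrix_cols_add Aᵀ P
  rw [Matrix.rank_transpose] at h
  have heq : Aᵀ.submatrix id (Subtype.val : {u // u ∈ P} → m)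
      = (A.submatrix (Subtype.val : {u // u ∈ P} → m) id)ᵀ := rfl
  rw [heq, Matrix.rank_transpose] at h
  exact h

lemma rank_le_rank_submatrix_add {m q : Type*} [Fintype m] [Fintype q]
    (A : Matrix m q K) (P : Finset m) (Q : Finset q) :
    A.rank ≤ (A.submatrix (Subtype.val : {u // u ∈ P} → m)
        (Subtype.val : {u // u ∈ Q} → q)).rank
      + (Fintype.card m - P.card) + (Fintype.card q - Q.card) := by
  calc A.rank ≤ (A.submatrix id (Subtype.val : {u // u ∈ Q} → q)).rank
      + (Fintype.card q - Q.card) := rank_le_rank_submatrix_cols_add A Q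
    _ ≤ ((A.submatrix id (Subtype.val : {u // u ∈ Q} → q)).submatrix
          (Subtype.val : {u // u ∈ P} → m) id).rank
        + (Fintype.card m - P.card) + (Fintype.card q - Q.card) := by
        gcongr
        exact rank_le_rank_submatrix_rows_add _ P
    _ = _ := by rw [Matrix.submatrix_submatrix]; rfl

lemma exists_submatrix_det_ne_zero {p q : Type*} [Fintype p] [Fintype q]
    (W : Matrix p q K) {k : ℕ} (h : k ≤ W.rank) :
    ∃ (r : Fin k → p) (c : Fin k → q), Function.Injective r ∧ Function.Injective c ∧
      (W.submatrix r c).det ≠ 0 := by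
  classical
  rw [Matrix.rank_eq_finrank_span_cols] at h
  obtain ⟨c, hcinj, hcli⟩ := exists_inj_linearIndependent Wᵀ h
  set W2 := W.submatrix id c with hW2def
  have hrank2 : W2.rank = k := by
    rw [Matrix.rank_eq_finrank_span_cols]
    have : W2ᵀ = Wᵀ ∘ c := rfl
    rw [show W2.col = Wᵀ ∘ c from this, finrank_span_eq_card hcli, Fintype.card_fin]
  have h2 : k ≤ finrank K (span K (Set.range (W2ᵀ)ᵀ)) := by
    have := Matrix.rank_eq_finrank_span_cols W2ᵀ
    rw [Matrix.rank_transpose, hrank2] at this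
    exact this.le
  obtain ⟨r, hrinj, hrli⟩ := exists_inj_linearIndependent ((W2ᵀ)ᵀ) h2
  refine ⟨r, c, hrinj, hcinj, ?_⟩
  have hrows : LinearIndependent K (fun t => (W.submatrix r c) t) := hrli
  have hunit : IsUnit (W.submatrix r c) :=
    Matrix.linearIndependent_rows_iff_isUnit.1 hrows
  exact ((Matrix.isUnit_iff_isUnit_det _).1 hunit).ne_zero

lemma det_eq_zero_of_rank_lt' {m : Type*} [Fintype m] [DecidableEq m] (M : Matrix m m K)
    (h : M.rank < Fintype.card m) : M.det = 0 := by
  by_contra hdet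
  have hu : IsUnit M := (Matrix.isUnit_iff_isUnit_det M).2 (isUnit_iff_ne_zero.2 hdet)
  rw [Matrix.rank_of_isUnit M hu] at h
  exact lt_irrefl _ h

/-- Key linear-algebra lemma: if all `k × k` northwest minors (rows `< i`, cols `< j`) of `N`
vanish and the antidiagonal `X` (rows `rX`, cols `cX`) contains `k` cells in the northwest
`i × j` region, then the antidiagonal determinant of `X` vanishes. -/
lemma det_side_eq_zero {n i j k m : ℕ} (N : Matrix (Fin n) (Fin n) K)
    (hminor : ∀ r c : Fin k → Fin n, StrictMono r → StrictMono c →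
      (∀ t, (r t : ℕ) < i) → (∀ t, (c t : ℕ) < j) → (N.submatrix r c).det = 0)
    (rX cX : Fin m → Fin n) (hrX : StrictMono rX) (hcX : StrictAnti cX)
    (g : Fin k → Fin m) (hg : Function.Injective g)
    (hgi : ∀ t, (rX (g t) : ℕ) < i) (hgj : ∀ t, (cX (g t) : ℕ) < j) :
    (N.submatrix rX (fun u => cX u.rev)).det = 0 := by
  classical
  -- dispose of the degenerate case k = 0
  rcases Nat.eq_zero_or_pos k with rfl | hkpos
  · exfalso
    have h0 := hminor (fun t => t.elim0) (fun t => t.elim0)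
      (fun a => a.elim0) (fun a => a.elim0) (fun t => t.elim0) (fun t => t.elim0)
    rw [Matrix.det_fin_zero] at h0
    exact one_ne_zero h0
  -- vanishing of minors for merely injective index maps
  have hminor' : ∀ r c : Fin k → Fin n, Function.Injective r → Function.Injective c →
      (∀ t, (r t : ℕ) < i) → (∀ t, (c t : ℕ) < j) → (N.submatrix r c).det = 0 := by
    intro r c hr hc hri hcj
    set σ := Tuple.sort r
    set τ := Tuple.sort c
    have hrs : StrictMono (r ∘ σ) :=
      (Tuple.monotone_sort r).strictMono_of_injective (hr.comp σ.injective)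
    have hcs : StrictMono (c ∘ τ) :=
      (Tuple.monotone_sort c).strictMono_of_injective (hc.comp τ.injective)
    have h0 := hminor (r ∘ σ) (c ∘ τ) hrs hcs (fun t => hri _) (fun t => hcj _)
    have heq : N.submatrix (r ∘ σ) (c ∘ τ) = ((N.submatrix r c).submatrix σ id).submatrix id τ := by
      simp [Matrix.submatrix_submatrix]
    rw [heq, Matrix.det_permute', Matrix.det_permute] at h0
    rcases Int.units_eq_one_or (Equiv.Perm.sign σ) with hσ | hσ <;>
      rcases Int.units_eq_one_or (Equiv.Perm.sign τ) with hτ | hτ <;>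
      simp only [hσ, hτ, Units.val_one, Units.val_neg, Int.cast_one, Int.cast_neg, one_mul,
        neg_mul, neg_neg, neg_eq_zero, one_smul] at h0 <;>
      simpa using h0
  set M : Matrix (Fin m) (Fin m) K := N.submatrix rX (fun u => cX u.rev) with hMdef
  -- row/column index sets
  set P : Finset (Fin m) := Finset.univ.filter (fun u => (rX u : ℕ) < i) with hPdef
  set J : Finset (Fin m) := Finset.univ.filter (fun u => (cX u : ℕ) < j) with hJdef
  set Q : Finset (Fin m) := Finset.univ.filter (fun u => (cX u.rev : ℕ) < j) with hQdef
  -- the block has rank < k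
  have hrankW : (M.submatrix (Subtype.val : {u // u ∈ P} → Fin m)
      (Subtype.val : {u // u ∈ Q} → Fin m)).rank < k := by
    by_contra hge
    push_neg at hge
    obtain ⟨r', c', hr', hc', hdet⟩ := exists_submatrix_det_ne_zero _ hge
    apply hdet
    have heq : (M.submatrix (Subtype.val : {u // u ∈ P} → Fin m)
        (Subtype.val : {u // u ∈ Q} → Fin m)).submatrix r' c'
        = N.submatrix (fun t => rX ((r' t) : Fin m)) (fun t => cX (((c' t) : Fin m)).rev) := by
      simp [hMdef, Matrix.submatrix_submatrix]; rfl
    rw [heq]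
    refine hminor' _ _ ?_ ?_ ?_ ?_
    · exact hrX.injective.comp (Subtype.val_injective.comp hr')
    · intro t1 t2 h12
      apply hc'
      apply Subtype.ext
      have := hcX.injective h12
      exact Fin.rev_injective this
    · intro t
      have := (c' t).2
      exact (Finset.mem_filter.1 (r' t).2).2
    · intro t
      exact (Finset.mem_filter.1 (c' t).2).2
  -- cardinality bookkeeping
  have hPJ : k ≤ (P ∩ J).card := by
    have hmem : ∀ t ∈ (Finset.univ : Finset (Fin k)), g t ∈ P ∩ J := by
      intro t _
      simp only [hPdef, hJdef, Finset.mem_inter, Finset.mem_filter, Finset.mem_univ, true_and]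
      exact ⟨hgi t, hgj t⟩
    have := Finset.card_le_card_of_injOn g hmem hg.injOn
    simpa using this
  have hPJunion : P ∪ J = Finset.univ := by
    apply Finset.eq_univ_iff_forall.2
    intro u
    have hw : g ⟨0, hkpos⟩ ∈ P ∩ J := by
      simp only [hPdef, hJdef, Finset.mem_inter, Finset.mem_filter, Finset.mem_univ, true_and]
      exact ⟨hgi _, hgj _⟩
    rw [Finset.mem_inter, hPdef, hJdef] at hw
    rcases le_total u (g ⟨0, hkpos⟩) with hle | hle
    · apply Finset.mem_union_left
      simp only [hPdef, Finset.mem_filter, Finset.mem_univ, true_and]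
      have : (rX u : ℕ) ≤ (rX (g ⟨0, hkpos⟩) : ℕ) := by
        exact_mod_cast (hrX.monotone hle)
      exact lt_of_le_of_lt this (hgi _)
    · apply Finset.mem_union_right
      simp only [hJdef, Finset.mem_filter, Finset.mem_univ, true_and]
      have : (cX u : ℕ) ≤ (cX (g ⟨0, hkpos⟩) : ℕ) := by
        exact_mod_cast (hcX.antitone hle)
      exact lt_of_le_of_lt this (hgj _)
  have hcards : m + k ≤ P.card + J.card := by
    have h1 := Finset.card_union_add_card_inter P J
    rw [hPJunion] at h1
    simp only [Finset.card_univ, Fintype.card_fin] at h1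
    omega
  have hQJ : Q.card = J.card := by
    apply Finset.card_bij (fun u _ => u.rev)
    · intro u hu
      simp only [hQdef, Finset.mem_filter, Finset.mem_univ, true_and] at hu
      simp only [hJdef, Finset.mem_filter, Finset.mem_univ, true_and]
      exact hu
    · intro u1 h1 u2 h2 h12
      exact Fin.rev_injective h12
    · intro v hv
      refine ⟨v.rev, ?_, by simp⟩
      simp only [hQdef, Finset.mem_filter, Finset.mem_univ, true_and, Fin.rev_rev]
      simpa [hJdef] using hv
  -- rank bound for M
  have hrankM : M.rank < m := by
    have h1 := rank_le_rank_submatrix_add M P Q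
    simp only [Fintype.card_fin] at h1
    have hPle : P.card ≤ m := by
      simpa using Finset.card_le_card (Finset.subset_univ P)
    have hQle : Q.card ≤ m := by
      simpa using Finset.card_le_card (Finset.subset_univ Q)
    omega
  have := det_eq_zero_of_rank_lt' M (by simpa using hrankM)
  exact this

end Aux

section Main

variable {K : Type*} [Field K] [IsAlgClosed K]

lemma antidiagDet_mem_side {n : ℕ} (I : Ideal (MvPolynomial (Fin n × Fin n) K))
    (S : Finset (ℕ × ℕ × ℕ))
    (hI : I = nwIdeal n K S) (hrad : I.IsRadical)
    {kA kX : ℕ} (rA cA : Fin kA → Fin n) (rX cX : Fin kX → Fin n)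
    (hrA : StrictMono rA)
    (hrX : StrictMono rX) (hcX : StrictAnti cX)
    (hgen : ∃ s ∈ S, kA = s.2.2 ∧ ∀ t, (rA t : ℕ) < s.1 ∧ (cA t : ℕ) < s.2.1)
    (hsub : ∀ t : Fin kA, (rA t, cA t) ∈ Set.range (fun u => (rX u, cX u))) :
    antidiagDet n K rX cX ∈ I := by
  classical
  obtain ⟨⟨i, j, k⟩, hsS, hk, hbound⟩ := hgen
  simp only at hk hbound
  subst hk
  rw [← hrad.radical, ← MvPolynomial.vanishingIdeal_zeroLocus_eq_radical (K := K) I]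
  intro x hx
  set N : Matrix (Fin n) (Fin n) K := Matrix.of (fun a b => x (a, b)) with hNdef
  have hEval : ∀ {k' : ℕ} (r c : Fin k' → Fin n),
      eval x ((genericMatrix n K).submatrix r c).det = (N.submatrix r c).det := by
    intro k' r c
    rw [RingHom.map_det]
    congr 1
    ext a b
    simp [genericMatrix, hNdef]
  have hminor : ∀ r c : Fin kA → Fin n, StrictMono r → StrictMono c →
      (∀ t, (r t : ℕ) < i) → (∀ t, (c t : ℕ) < j) → (N.submatrix r c).det = 0 := by
    intro r c hr hc hri hcj
    have hmem : ((genericMatrix n K).submatrix r c).det ∈ I := by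
      rw [hI, nwIdeal]
      apply Ideal.subset_span
      exact Set.mem_biUnion hsS ⟨r, c, hr, hc, hri, hcj, rfl⟩
    have := hx _ hmem
    rw [← hEval]; exact this
  choose g hg using hsub
  have hgrow : ∀ t, rX (g t) = rA t := fun t => congrArg Prod.fst (hg t)
  have hgcol : ∀ t, cX (g t) = cA t := fun t => congrArg Prod.snd (hg t)
  have hginj : Function.Injective g := by
    intro t1 t2 h12
    apply hrA.injective
    rw [← hgrow t1, ← hgrow t2, h12]
  have h0 := det_side_eq_zero N hminor rX cX hrX hcX g hginj
    (fun t => by rw [hgrow]; exact (hbound t).1)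
    (fun t => by rw [hgcol]; exact (hbound t).2)
  rw [antidiagDet]
  exact (hEval _ _).trans h0

end Main

/-- Let `K` be an algebraically closed field, and let `I_A` and `I_B` be
radical ideals of `K[m_{a,b}]` given by northwest rank conditions (with defining triple sets
`SA`, `SB` of positive integers).  Let `A` (given by `rA`, `cA`) and `B` (given by `rB, cB`)
be antidiagonals such that `det A` is a Fulton generator of `I_A` and `det B` is a Fulton
generator of `I_B`.  If the union `X = A ∪ B` of the cell sets is again an antidiagonal
(given by `rX, cX`) and `A ∩ B ≠ ∅`, then `det X ∈ I_A ∩ I_B`. -/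
theorem antidiagDet_union_mem_inf {K : Type*} [Field K] [IsAlgClosed K] {n : ℕ}
    (IA IB : Ideal (MvPolynomial (Fin n × Fin n) K))
    (SA SB : Finset (ℕ × ℕ × ℕ))
    (hSA : ∀ s ∈ SA, 0 < s.1 ∧ 0 < s.2.1 ∧ 0 < s.2.2)
    (hSB : ∀ s ∈ SB, 0 < s.1 ∧ 0 < s.2.1 ∧ 0 < s.2.2)
    (hIA : IA = nwIdeal n K SA) (hIB : IB = nwIdeal n K SB)
    (hradA : IA.IsRadical) (hradB : IB.IsRadical)
    {kA kB kX : ℕ}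
    (rA cA : Fin kA → Fin n) (rB cB : Fin kB → Fin n) (rX cX : Fin kX → Fin n)
    (hrA : StrictMono rA) (hcA : StrictAnti cA)
    (hrB : StrictMono rB) (hcB : StrictAnti cB)
    (hrX : StrictMono rX) (hcX : StrictAnti cX)
    -- `det A` is a Fulton generator of `I_A`: for some defining triple `(i,j,k) ∈ SA`,
    -- `|A| = k` and `A ⊆ {1,…,i} × {1,…,j}`:
    (hAgen : ∃ s ∈ SA, kA = s.2.2 ∧ ∀ t, (rA t : ℕ) < s.1 ∧ (cA t : ℕ) < s.2.1)
    (hBgen : ∃ s ∈ SB, kB = s.2.2 ∧ ∀ t, (rB t : ℕ) < s.1 ∧ (cB t : ℕ) < s.2.1)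
    -- `X = A ∪ B` as sets of cells:
    (hunion : Set.range (fun t => (rX t, cX t)) =
      Set.range (fun t => (rA t, cA t)) ∪ Set.range (fun t => (rB t, cB t)))
    -- `A ∩ B ≠ ∅`:
    (hmeet : (Set.range (fun t => (rA t, cA t)) ∩
      Set.range (fun t => (rB t, cB t))).Nonempty) :
    antidiagDet n K rX cX ∈ IA ⊓ IB := by
  have hsubA : ∀ t : Fin kA, (rA t, cA t) ∈ Set.range (fun u => (rX u, cX u)) := by
    intro t
    rw [hunion]
    exact Or.inl ⟨t, rfl⟩
  have hsubB : ∀ t : Fin kB, (rB t, cB t) ∈ Set.range (fun u => (rX u, cX u)) := by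
    intro t
    rw [hunion]
    exact Or.inr ⟨t, rfl⟩
  exact Submodule.mem_inf.2
    ⟨antidiagDet_mem_side IA SA hIA hradA rA cA rX cX hrA hrX hcX hAgen hsubA,
     antidiagDet_mem_side IB SB hIB hradB rB cB rX cX hrB hrX hcX hBgen hsubB⟩
end

section
/- Let K be a field and π a partial permutation of {1,...,n}. Define the diagram D(π) = {(i,j) : (π(i) is undefined or π(i) > j) and (π^{-1}(j) is undefined or π^{-1}(j) > i)} and the essential set Ess(π) = {(i,j) ∈ D(π) : (i+1,j) ∉ D(π) and (i,j+1) ∉ D(π)}. Then in K[m_{a,b} : 1 ≤ a,b ≤ n], the ideal generated by all (r(π)_{ij}+1) × (r(π)_{ij}+1) minors of the northwest i × j submatrix of the generic matrix for (i,j) ∈ Ess(π) equals the ideal I_π generated by all (r(π)_{ij}+1) × (r(π)_{ij}+1) minors of the northwest i × j submatrix over all 1 ≤ i,j ≤ n. -/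
open MvPolynomial

/-- The rank matrix of a partial permutation `π` (encoded as `Fin n → Option (Fin n)`):
`r(π)_{ij} = #{a ≤ i : π a is defined and π a ≤ j}`. -/
noncomputable def prank {n : ℕ} (π : Fin n → Option (Fin n)) (i j : Fin n) : ℕ :=
  Nat.card {a : Fin n // a ≤ i ∧ ∃ x ≤ j, π a = some x}

-- helper: strict mono from Fin k has t ≤ r t
lemma strictMono_val_le {k n : ℕ} {r : Fin k → Fin n} (h : StrictMono r) (t : Fin k) :
    (t : ℕ) ≤ (r t : ℕ) := by
  have H : ∀ m : ℕ, ∀ ht : m < k, m ≤ (r ⟨m, ht⟩ : ℕ) := by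
    intro m
    induction m with
    | zero => intro _; exact Nat.zero_le _
    | succ m ih =>
      intro ht
      have h1 := ih (by omega)
      have h2 : (⟨m, by omega⟩ : Fin k) < ⟨m + 1, ht⟩ := by simp [Fin.lt_def]
      have h3 := h h2
      rw [Fin.lt_def] at h3
      omega
  simpa using H t.1 t.2

lemma nwMinors_row_empty {n : ℕ} {K : Type*} [CommRing K] {i j k : ℕ} (h : i < k) :
    nwMinors n K i j k = ∅ := by
  rw [Set.eq_empty_iff_forall_notMem]
  rintro f ⟨r, c, hr, hc, hri, hcj, rfl⟩
  have h1 := strictMono_val_le hr ⟨i, h⟩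
  have h2 := hri ⟨i, h⟩
  simp at h1
  omega

lemma nwMinors_col_empty {n : ℕ} {K : Type*} [CommRing K] {i j k : ℕ} (h : j < k) :
    nwMinors n K i j k = ∅ := by
  rw [Set.eq_empty_iff_forall_notMem]
  rintro f ⟨r, c, hr, hc, hri, hcj, rfl⟩
  have h1 := strictMono_val_le hc ⟨j, h⟩
  have h2 := hcj ⟨j, h⟩
  simp at h1
  omega

lemma nwMinors_mono {n : ℕ} {K : Type*} [CommRing K] {i j i' j' k : ℕ}
    (h1 : i ≤ i') (h2 : j ≤ j') : nwMinors n K i j k ⊆ nwMinors n K i' j' k := by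
  rintro f ⟨r, c, hr, hc, hri, hcj, rfl⟩
  exact ⟨r, c, hr, hc, fun t => lt_of_lt_of_le (hri t) h1,
    fun t => lt_of_lt_of_le (hcj t) h2, rfl⟩

lemma prank_eq_ncard {n : ℕ} (π : Fin n → Option (Fin n)) (i j : Fin n) :
    prank π i j = {a : Fin n | a ≤ i ∧ ∃ x ≤ j, π a = some x}.ncard :=
  Nat.card_coe_set_eq _

-- Laplace expansion along the last row
lemma nw_expand_row {n : ℕ} {K : Type*} [CommRing K] {I J k : ℕ}
    {f : MvPolynomial (Fin n × Fin n) K} (hf : f ∈ nwMinors n K (I + 1) J (k + 1)) :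
    f ∈ Ideal.span (nwMinors n K I J k) := by
  obtain ⟨r, c, hr, hc, hri, hcj, rfl⟩ := hf
  rw [Matrix.det_succ_row _ (Fin.last k)]
  refine Ideal.sum_mem _ fun j' _ => Ideal.mul_mem_left _ _ (Ideal.subset_span ?_)
  rw [Fin.succAbove_last, Matrix.submatrix_submatrix]
  refine ⟨r ∘ Fin.castSucc, c ∘ j'.succAbove, hr.comp Fin.strictMono_castSucc,
    hc.comp (Fin.strictMono_succAbove j'), fun t => ?_, fun t => hcj _, rfl⟩
  have h1 := hr (Fin.castSucc_lt_last t)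
  rw [Fin.lt_def] at h1
  have h2 := hri (Fin.last k)
  simp only [Function.comp_apply]
  omega

-- Laplace expansion along the last column
lemma nw_expand_col {n : ℕ} {K : Type*} [CommRing K] {I J k : ℕ}
    {f : MvPolynomial (Fin n × Fin n) K} (hf : f ∈ nwMinors n K I (J + 1) (k + 1)) :
    f ∈ Ideal.span (nwMinors n K I J k) := by
  obtain ⟨r, c, hr, hc, hri, hcj, rfl⟩ := hf
  rw [Matrix.det_succ_column _ (Fin.last k)]
  refine Ideal.sum_mem _ fun i' _ => Ideal.mul_mem_left _ _ (Ideal.subset_span ?_)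
  rw [Fin.succAbove_last, Matrix.submatrix_submatrix]
  refine ⟨r ∘ i'.succAbove, c ∘ Fin.castSucc, hr.comp (Fin.strictMono_succAbove i'),
    hc.comp Fin.strictMono_castSucc, fun t => hri _, fun t => ?_, rfl⟩
  have h1 := hc (Fin.castSucc_lt_last t)
  rw [Fin.lt_def] at h1
  have h2 := hcj (Fin.last k)
  simp only [Function.comp_apply]
  omega

section prankLemmas
variable {n : ℕ} (π : Fin n → Option (Fin n))

/-- Row step up: if `π i'` is undefined or `> j`, adding row `i' = i+1` doesn't change rank. -/
lemma prank_row_up {i i' j : Fin n} (h : (i' : ℕ) = (i : ℕ) + 1)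
    (hrow : ∀ x, π i' = some x → j < x) : prank π i' j = prank π i j := by
  rw [prank_eq_ncard, prank_eq_ncard]
  congr 1
  ext a
  simp only [Set.mem_setOf_eq]
  constructor
  · rintro ⟨hai, x, hxj, hax⟩
    refine ⟨?_, x, hxj, hax⟩
    rcases eq_or_lt_of_le hai with rfl | hlt
    · exact absurd (hrow x hax) (not_lt.mpr hxj)
    · rw [Fin.lt_def] at hlt; rw [Fin.le_def]; omega
  · rintro ⟨hai, hx⟩
    refine ⟨?_, hx⟩
    rw [Fin.le_def] at hai ⊢; omega

/-- Column step up. -/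
lemma prank_col_up {i j j' : Fin n} (h : (j' : ℕ) = (j : ℕ) + 1)
    (hcol : ∀ a, π a = some j' → i < a) : prank π i j' = prank π i j := by
  rw [prank_eq_ncard, prank_eq_ncard]
  congr 1
  ext a
  simp only [Set.mem_setOf_eq]
  constructor
  · rintro ⟨hai, x, hxj, hax⟩
    refine ⟨hai, x, ?_, hax⟩
    by_cases hxe : x = j'
    · subst hxe; exact absurd (hcol a hax) (not_lt.mpr hai)
    · have : x < j' := lt_of_le_of_ne hxj hxe
      rw [Fin.lt_def] at this; rw [Fin.le_def]; omega
  · rintro ⟨hai, x, hxj, hax⟩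
    refine ⟨hai, x, ?_, hax⟩
    rw [Fin.le_def] at hxj ⊢; omega

/-- Row step down (`π i = some x`, `x ≤ j`, `i > 0`). -/
lemma prank_row_down {i i' j : Fin n} (h : (i' : ℕ) + 1 = (i : ℕ)) {x : Fin n}
    (hx : π i = some x) (hxj : x ≤ j) : prank π i j = prank π i' j + 1 := by
  rw [prank_eq_ncard, prank_eq_ncard]
  have hset : {a : Fin n | a ≤ i ∧ ∃ x ≤ j, π a = some x} =
      insert i {a : Fin n | a ≤ i' ∧ ∃ x ≤ j, π a = some x} := by
    ext a
    simp only [Set.mem_insert_iff, Set.mem_setOf_eq]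
    constructor
    · rintro ⟨hai, hx'⟩
      rcases eq_or_lt_of_le hai with rfl | hlt
      · exact Or.inl rfl
      · rw [Fin.lt_def] at hlt
        exact Or.inr ⟨by rw [Fin.le_def]; omega, hx'⟩
    · rintro (rfl | ⟨hai', hx'⟩)
      · exact ⟨le_refl _, x, hxj, hx⟩
      · rw [Fin.le_def] at hai'
        exact ⟨by rw [Fin.le_def]; omega, hx'⟩
  rw [hset, Set.ncard_insert_of_notMem ?_ (Set.toFinite _)]
  rintro ⟨hii', -⟩
  rw [Fin.le_def] at hii'
  omega

/-- Row at the top (`i = 0`, `π i = some x ≤ j`): rank is 1. -/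
lemma prank_row_zero {i j : Fin n} (hi : (i : ℕ) = 0) {x : Fin n}
    (hx : π i = some x) (hxj : x ≤ j) : prank π i j = 1 := by
  rw [prank_eq_ncard]
  have : {a : Fin n | a ≤ i ∧ ∃ x ≤ j, π a = some x} = {i} := by
    ext a
    simp only [Set.mem_setOf_eq, Set.mem_singleton_iff]
    constructor
    · rintro ⟨hai, -⟩
      rw [Fin.le_def] at hai
      exact Fin.ext (by omega)
    · rintro rfl
      exact ⟨le_refl _, x, hxj, hx⟩
  rw [this, Set.ncard_singleton]

variable (hπ : ∀ a b x, π a = some x → π b = some x → a = b)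
include hπ

/-- Column step down (`π a0 = some j`, `a0 ≤ i`, `j > 0`). -/
lemma prank_col_down {i j j' : Fin n} (h : (j' : ℕ) + 1 = (j : ℕ)) {a0 : Fin n}
    (ha0 : π a0 = some j) (ha0i : a0 ≤ i) : prank π i j = prank π i j' + 1 := by
  rw [prank_eq_ncard, prank_eq_ncard]
  have hset : {a : Fin n | a ≤ i ∧ ∃ x ≤ j, π a = some x} =
      insert a0 {a : Fin n | a ≤ i ∧ ∃ x ≤ j', π a = some x} := by
    ext a
    simp only [Set.mem_insert_iff, Set.mem_setOf_eq]
    constructor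
    · rintro ⟨hai, x, hxj, hax⟩
      by_cases hxe : x = j
      · subst hxe; exact Or.inl (hπ a a0 x hax ha0)
      · have hlt : x < j := lt_of_le_of_ne hxj hxe
        rw [Fin.lt_def] at hlt
        exact Or.inr ⟨hai, x, by rw [Fin.le_def]; omega, hax⟩
    · rintro (rfl | ⟨hai, x, hxj, hax⟩)
      · exact ⟨ha0i, j, le_refl _, ha0⟩
      · rw [Fin.le_def] at hxj
        exact ⟨hai, x, by rw [Fin.le_def]; omega, hax⟩
  rw [hset, Set.ncard_insert_of_notMem ?_ (Set.toFinite _)]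
  rintro ⟨-, x, hxj, hax⟩
  rw [ha0] at hax
  have : x = j := (Option.some_injective _ hax.symm)
  subst this
  rw [Fin.le_def] at hxj
  omega

/-- Column at the left edge (`j = 0`, hit by some `a0 ≤ i`): rank is 1. -/
lemma prank_col_zero {i j : Fin n} (hj : (j : ℕ) = 0) {a0 : Fin n}
    (ha0 : π a0 = some j) (ha0i : a0 ≤ i) : prank π i j = 1 := by
  rw [prank_eq_ncard]
  have : {a : Fin n | a ≤ i ∧ ∃ x ≤ j, π a = some x} = {a0} := by
    ext a
    simp only [Set.mem_setOf_eq, Set.mem_singleton_iff]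
    constructor
    · rintro ⟨hai, x, hxj, hax⟩
      rw [Fin.le_def] at hxj
      have : x = j := Fin.ext (by omega)
      subst this
      exact hπ a a0 x hax ha0
    · rintro rfl
      exact ⟨ha0i, j, le_refl _, ha0⟩
  rw [this, Set.ncard_singleton]

end prankLemmas

/-- The (Rothe) diagram of a partial permutation `π`: the cells `(i,j)` such that `π i` is
undefined or `π i > j`, and `π⁻¹ j` is undefined or `π⁻¹ j > i`. -/
def rotheDiagram {n : ℕ} (π : Fin n → Option (Fin n)) : Set (Fin n × Fin n) :=
  { p | (∀ x, π p.1 = some x → p.2 < x) ∧ (∀ a, π a = some p.2 → p.1 < a) }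

/-- The essential set of a partial permutation `π`: cells `(i,j)` of the diagram such that
neither `(i+1,j)` nor `(i,j+1)` lies in the diagram. -/
def essentialSet {n : ℕ} (π : Fin n → Option (Fin n)) : Set (Fin n × Fin n) :=
  { p | p ∈ rotheDiagram π ∧
    (∀ i' : Fin n, (i' : ℕ) = (p.1 : ℕ) + 1 → (i', p.2) ∉ rotheDiagram π) ∧
    (∀ j' : Fin n, (j' : ℕ) = (p.2 : ℕ) + 1 → (p.1, j') ∉ rotheDiagram π) }

section keyLemmas
variable {K : Type*} [CommRing K] {n : ℕ} (π : Fin n → Option (Fin n))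

/-- For cells in the diagram: their minors lie in the essential-set span. -/
lemma key_diag : ∀ m : ℕ, ∀ i j : Fin n,
    (n - (i : ℕ)) + (n - (j : ℕ)) ≤ m → (i, j) ∈ rotheDiagram π →
    nwMinors n K ((i : ℕ) + 1) ((j : ℕ) + 1) (prank π i j + 1) ⊆
      (Ideal.span (⋃ p ∈ essentialSet π,
        nwMinors n K ((p.1 : ℕ) + 1) ((p.2 : ℕ) + 1) (prank π p.1 p.2 + 1)) :
        Set (MvPolynomial (Fin n × Fin n) K)) := by
  intro m
  induction m with
  | zero => intro i j hm _; have := i.2; omega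
  | succ m ih =>
    intro i j hm hD
    by_cases hE : (i, j) ∈ essentialSet π
    · intro f hf
      exact Ideal.subset_span (Set.mem_biUnion hE hf)
    · have hne : ¬((∀ i' : Fin n, (i' : ℕ) = (i : ℕ) + 1 → (i', j) ∉ rotheDiagram π) ∧
          (∀ j' : Fin n, (j' : ℕ) = (j : ℕ) + 1 → (i, j') ∉ rotheDiagram π)) :=
        fun h => hE ⟨hD, h.1, h.2⟩
      rw [not_and_or] at hne
      rcases hne with h | h
      · push_neg at h
        obtain ⟨i', hi', hDi⟩ := h
        have hpr : prank π i' j = prank π i j := prank_row_up π hi' hDi.1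
        have hsub : nwMinors n K ((i : ℕ) + 1) ((j : ℕ) + 1) (prank π i j + 1) ⊆
            nwMinors n K ((i' : ℕ) + 1) ((j : ℕ) + 1) (prank π i' j + 1) := by
          rw [hpr]; exact nwMinors_mono (by omega) le_rfl
        have := i'.2
        exact subset_trans hsub (ih i' j (by omega) hDi)
      · push_neg at h
        obtain ⟨j', hj', hDj⟩ := h
        have hpr : prank π i j' = prank π i j := prank_col_up π hj' hDj.2
        have hsub : nwMinors n K ((i : ℕ) + 1) ((j : ℕ) + 1) (prank π i j + 1) ⊆
            nwMinors n K ((i : ℕ) + 1) ((j' : ℕ) + 1) (prank π i j' + 1) := by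
          rw [hpr]; exact nwMinors_mono le_rfl (by omega)
        have := j'.2
        exact subset_trans hsub (ih i j' (by omega) hDj)

variable (hπ : ∀ a b x, π a = some x → π b = some x → a = b)
include hπ

/-- All cells: their minors lie in the essential-set span. -/
lemma key_all : ∀ m : ℕ, ∀ i j : Fin n, (i : ℕ) + (j : ℕ) < m →
    nwMinors n K ((i : ℕ) + 1) ((j : ℕ) + 1) (prank π i j + 1) ⊆
      (Ideal.span (⋃ p ∈ essentialSet π,
        nwMinors n K ((p.1 : ℕ) + 1) ((p.2 : ℕ) + 1) (prank π p.1 p.2 + 1)) :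
        Set (MvPolynomial (Fin n × Fin n) K)) := by
  intro m
  induction m with
  | zero => intro i j hm; omega
  | succ m ih =>
    intro i j hm
    by_cases hD : (i, j) ∈ rotheDiagram π
    · exact key_diag π (n + n) i j (by omega) hD
    · rw [rotheDiagram, Set.mem_setOf_eq, not_and_or] at hD
      rcases hD with h | h
      · push_neg at h
        obtain ⟨x, hx, hxj⟩ := h
        by_cases hi : (i : ℕ) = 0
        · rw [prank_row_zero π hi hx hxj, nwMinors_row_empty (by omega)]
          exact Set.empty_subset _
        · set i' : Fin n := ⟨(i : ℕ) - 1, by omega⟩ with hi'def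
          have hi' : (i' : ℕ) + 1 = (i : ℕ) := by simp [hi'def]; omega
          have hpr : prank π i j = prank π i' j + 1 := prank_row_down π hi' hx hxj
          intro f hf
          rw [hpr] at hf
          have hf' : f ∈ Ideal.span (nwMinors n K (i : ℕ) ((j : ℕ) + 1) (prank π i' j + 1)) :=
            nw_expand_row hf
          refine Ideal.span_le.mpr ?_ hf'
          have : nwMinors n K (i : ℕ) ((j : ℕ) + 1) (prank π i' j + 1) =
              nwMinors n K ((i' : ℕ) + 1) ((j : ℕ) + 1) (prank π i' j + 1) := by rw [hi']
          rw [this]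
          have hlt : (i' : ℕ) + (j : ℕ) < m := by
            have : (i' : ℕ) = (i : ℕ) - 1 := rfl
            omega
          exact ih i' j hlt
      · push_neg at h
        obtain ⟨a0, ha0, ha0i⟩ := h
        by_cases hj : (j : ℕ) = 0
        · rw [prank_col_zero π hπ hj ha0 ha0i, nwMinors_col_empty (by omega)]
          exact Set.empty_subset _
        · set j' : Fin n := ⟨(j : ℕ) - 1, by omega⟩ with hj'def
          have hj' : (j' : ℕ) + 1 = (j : ℕ) := by simp [hj'def]; omega
          have hpr : prank π i j = prank π i j' + 1 := prank_col_down π hπ hj' ha0 ha0i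
          intro f hf
          rw [hpr] at hf
          have hf' : f ∈ Ideal.span (nwMinors n K ((i : ℕ) + 1) (j : ℕ) (prank π i j' + 1)) :=
            nw_expand_col hf
          refine Ideal.span_le.mpr ?_ hf'
          have : nwMinors n K ((i : ℕ) + 1) (j : ℕ) (prank π i j' + 1) =
              nwMinors n K ((i : ℕ) + 1) ((j' : ℕ) + 1) (prank π i j' + 1) := by rw [hj']
          rw [this]
          have hlt : (i : ℕ) + (j' : ℕ) < m := by
            have : (j' : ℕ) = (j : ℕ) - 1 := rfl
            omega
          exact ih i j' hlt

end keyLemmas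

/-- Let `K` be a field and `π` a partial permutation of `{1,…,n}`.
The ideal generated by the `(r(π)_{ij}+1) × (r(π)_{ij}+1)` minors of the northwest
`i × j` submatrices of the generic matrix for `(i,j)` ranging over the essential set of
`π` equals the ideal `I_π` generated by these minors over all `1 ≤ i,j ≤ n`. -/
theorem essentialSet_span_eq {K : Type*} [Field K] {n : ℕ}
    (π : Fin n → Option (Fin n))
    (hπ : ∀ a b x, π a = some x → π b = some x → a = b) :
    Ideal.span (⋃ p ∈ essentialSet π,
        nwMinors n K ((p.1 : ℕ) + 1) ((p.2 : ℕ) + 1) (prank π p.1 p.2 + 1)) =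
      Ideal.span (⋃ (i : Fin n), ⋃ (j : Fin n),
        nwMinors n K ((i : ℕ) + 1) ((j : ℕ) + 1) (prank π i j + 1)) := by
  apply le_antisymm
  · apply Ideal.span_mono
    refine Set.iUnion₂_subset fun p hp => ?_
    intro f hf
    exact Set.mem_iUnion.mpr ⟨p.1, Set.mem_iUnion.mpr ⟨p.2, hf⟩⟩
  · rw [Ideal.span_le]
    refine Set.iUnion_subset fun i => Set.iUnion_subset fun j => ?_
    exact key_all π hπ ((i : ℕ) + (j : ℕ) + 1) i j (by omega)
end
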